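/- If r and n are natural numbers and G is an abelian group with |G| ≥ r²·n, then for every r-coloring of G there exists a monochromatic symmetric subset A ⊆ G with |A| ≥ n. -/

import Mathlib

open Finset Function

lemma finite_case {r n : ℕ} (G : Type) [AddCommGroup G] [Fintype G]
    (hG : r ^ 2 * n ≤ Fintype.card G) (χ : G → Fin r) :
    ∃ (x : G) (i : Fin r) (A : Finset G), n ≤ A.card ∧ (∀ a ∈ A, χ a = i) ∧
      ∀ a ∈ A, x + x - a ∈ A := by
  classical
  have hr : 0 < r := (χ 0).pos
  set φ : G →+ G := { toFun := fun z => z + z,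
                      map_zero' := by simp,
                      map_add' := by intro a b; abel } with hφ
  have hφapp : ∀ z : G, φ z = z + z := fun z => rfl
  set H : AddSubgroup G := φ.range with hH
  let Q := G ⧸ H
  have : Fintype Q := Fintype.ofFinite Q
  set k : ℕ := (univ.filter fun z : G => z + z = 0).card with hk
  have hfiber : ∀ x0 : G, (univ.filter fun x : G => x + x = x0 + x0).card = k := by
    intro x0
    rw [hk]
    apply Finset.card_nbij' (fun x => x - x0) (fun z => z + x0)
    · intro x hx
      simp only [coe_filter, Set.mem_setOf_eq, mem_filter, mem_univ, true_and] at hx ⊢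
      rw [show x - x0 + (x - x0) = x + x - (x0 + x0) by abel, hx]
      abel
    · intro z hz
      simp only [coe_filter, Set.mem_setOf_eq, mem_filter, mem_univ, true_and] at hz ⊢
      rw [show z + x0 + (z + x0) = z + z + (x0 + x0) by abel, hz]
      abel
    · intro x _; simp
    · intro z _; simp
  set Sset : Finset (G × G) :=
    univ.filter (fun p : G × G => χ p.2 = χ (p.1 + p.1 - p.2)) with hS
  set Tset : Finset (G × G) :=
    univ.filter (fun p : G × G => χ p.1 = χ p.2 ∧ p.1 - p.2 ∈ H) with hT
  have hmaps : ∀ p ∈ Sset, (p.2, p.1 + p.1 - p.2) ∈ Tset := by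
    intro p hp
    simp only [hS, hT, coe_filter, Set.mem_setOf_eq, mem_filter, mem_univ, true_and] at hp ⊢
    refine ⟨hp, ⟨p.2 - p.1, ?_⟩⟩
    show (p.2 - p.1) + (p.2 - p.1) = p.2 - (p.1 + p.1 - p.2)
    abel
  have hfib2 : ∀ b ∈ Tset,
      (Sset.filter fun p => (p.2, p.1 + p.1 - p.2) = b).card = k := by
    rintro ⟨b1, b2⟩ hb
    simp only [hT, coe_filter, Set.mem_setOf_eq, mem_filter, mem_univ, true_and] at hb
    obtain ⟨hbχ, c, hc⟩ := hb
    have hc' : c + c = b1 - b2 := hc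
    have hx0 : (b1 - c) + (b1 - c) = b1 + b2 := by
      rw [show (b1 - c) + (b1 - c) = b1 + b1 - (c + c) by abel, hc']; abel
    rw [← hfiber (b1 - c)]
    apply Finset.card_nbij' (fun p => p.1) (fun x => (x, b1))
    · rintro ⟨a1, a2⟩ hp
      simp only [hS, coe_filter, Set.mem_setOf_eq, mem_filter, mem_univ, true_and, Prod.mk.injEq] at hp ⊢
      obtain ⟨-, h1, h2⟩ := hp
      rw [hx0, eq_add_of_sub_eq h2, h1, add_comm]
    · intro x hx
      simp only [coe_filter, Set.mem_setOf_eq, mem_filter, mem_univ, true_and, hx0] at hx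
      have hxb : x + x - b1 = b2 := by rw [hx]; abel
      simp only [hS, coe_filter, Set.mem_setOf_eq, mem_filter, mem_univ, true_and, Prod.mk.injEq, hxb]
      exact ⟨hbχ, trivial⟩
    · rintro ⟨a1, a2⟩ hp
      simp only [hS, coe_filter, Set.mem_setOf_eq, mem_filter, mem_univ, true_and, Prod.mk.injEq] at hp
      simp [hp.2.1]
    · intro x hx; rfl
  have hST : Sset.card = k * Tset.card := by
    rw [Finset.card_eq_sum_card_fiberwise hmaps, Finset.sum_congr rfl hfib2,
      Finset.sum_const, smul_eq_mul, mul_comm]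
  -- classify by coset and color
  set cl : G → Q × Fin r := fun a => ((a : Q), χ a) with hcl
  set cnt : Q × Fin r → ℕ := fun y => (univ.filter fun a : G => cl a = y).card with hcnt
  have hTT : Tset = univ.filter (fun p : G × G => cl p.1 = cl p.2) := by
    rw [hT]
    apply Finset.filter_congr
    intro p _
    rw [hcl]
    simp only [Prod.mk.injEq]
    rw [QuotientAddGroup.eq_iff_sub_mem, and_comm]
  have hTcount : Tset.card = ∑ y : Q × Fin r, (cnt y)^2 := by
    rw [hTT, Finset.card_eq_sum_card_fiberwise
      (f := fun p : G × G => cl p.1) (t := univ) (fun p _ => mem_univ _)]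
    apply Finset.sum_congr rfl
    intro y _
    have : ((univ.filter (fun p : G × G => cl p.1 = cl p.2)).filter
        (fun p => cl p.1 = y)) =
        (univ.filter fun a : G => cl a = y) ×ˢ (univ.filter fun a : G => cl a = y) := by
      ext ⟨a, b⟩
      simp only [coe_filter, Set.mem_setOf_eq, mem_filter, mem_univ, true_and, Finset.mem_product]
      constructor
      · rintro ⟨h1, h2⟩; exact ⟨h2, h2 ▸ h1.symm⟩
      · rintro ⟨h1, h2⟩; exact ⟨h1.trans h2.symm, h1⟩
    rw [this, Finset.card_product, hcnt, sq]
  have hsum : ∑ y : Q × Fin r, cnt y = Fintype.card G := by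
    rw [← Finset.card_univ (α := G), Finset.card_eq_sum_card_fiberwise
      (f := cl) (t := univ) (fun p _ => mem_univ _)]
  -- Cauchy-Schwarz
  have hCS : (Fintype.card G)^2 ≤ (Fintype.card Q * r) * ∑ y : Q × Fin r, (cnt y)^2 := by
    have h := sq_sum_le_card_mul_sum_sq (s := (univ : Finset (Q × Fin r)))
      (f := fun y => (cnt y : ℤ))
    rw [← Nat.cast_sum] at h
    rw [hsum] at h
    have hcard : (univ : Finset (Q × Fin r)).card = Fintype.card Q * r := by
      simp [Fintype.card_prod]
    rw [hcard] at h
    exact_mod_cast h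
  -- k = card Q
  have hkQ : k = Fintype.card Q := by
    have h1 : Nat.card G = Nat.card (G ⧸ φ.ker) * Nat.card φ.ker :=
      AddSubgroup.card_eq_card_quotient_mul_card_addSubgroup φ.ker
    have h2 : Nat.card (G ⧸ φ.ker) = Nat.card φ.range :=
      Nat.card_congr (QuotientAddGroup.quotientKerEquivRange φ).toEquiv
    have h3 : Nat.card G = Nat.card Q * Nat.card H :=
      AddSubgroup.card_eq_card_quotient_mul_card_addSubgroup H
    have h4 : Nat.card φ.ker = k := by
      rw [hk, Nat.card_eq_fintype_card, Fintype.card_subtype]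
      congr 1
      apply Finset.filter_congr
      intro z _
      simp only [AddMonoidHom.mem_ker, hφapp, eq_iff_iff]
    have h5 : 0 < Nat.card φ.range := Nat.card_pos
    have h6 : Nat.card φ.range * k = Nat.card φ.range * Fintype.card Q := by
      rw [← h4, ← h2, ← h1, h3, Nat.card_eq_fintype_card (α := Q), hH, mul_comm, h2]
    rw [← Nat.eq_of_mul_eq_mul_left h5 h6]
  have hmain : (Fintype.card G)^2 ≤ r * Sset.card := by
    rw [hST, hkQ]
    calc (Fintype.card G)^2 ≤ Fintype.card Q * r * ∑ y : Q × Fin r, (cnt y)^2 := hCS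
      _ = r * (Fintype.card Q * Tset.card) := by rw [hTcount]; ring
  -- pigeonhole over centers
  set w : G → ℕ := fun x => (univ.filter fun a : G => χ a = χ (x + x - a)).card with hw
  have hSw : Sset.card = ∑ x : G, w x := by
    rw [Finset.card_eq_sum_card_fiberwise
      (f := fun p : G × G => p.1) (t := univ) (fun p _ => mem_univ _)]
    apply Finset.sum_congr rfl
    intro x _
    apply Finset.card_nbij' (fun p => p.2) (fun a => (x, a))
    · rintro ⟨p1, p2⟩ hp
      simp only [hS, coe_filter, Set.mem_setOf_eq, mem_filter, mem_univ, true_and] at hp ⊢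
      obtain ⟨h1, h2⟩ := hp
      rw [← h2]
      exact h1
    · intro a ha
      simp only [hw, hS, coe_filter, Set.mem_setOf_eq, mem_filter, mem_univ, true_and] at ha ⊢
      exact ⟨ha, trivial⟩
    · rintro ⟨p1, p2⟩ hp
      simp only [hS, coe_filter, Set.mem_setOf_eq, mem_filter, mem_univ, true_and] at hp
      simp [hp.2]
    · intro a _; rfl
  obtain ⟨x, -, hxmax⟩ := Finset.exists_max_image (univ : Finset G) w ⟨0, mem_univ 0⟩
  have hSx : Sset.card ≤ Fintype.card G * w x := by
    rw [hSw]
    calc ∑ x', w x' ≤ #(univ : Finset G) • w x :=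
          Finset.sum_le_card_nsmul _ _ _ (fun y _ => hxmax y (mem_univ y))
      _ = Fintype.card G * w x := by rw [smul_eq_mul, card_univ]
  -- pigeonhole over colors
  set Afin : Fin r → Finset G :=
    fun i => univ.filter (fun a => χ a = i ∧ χ (x + x - a) = i) with hA
  have hwx : w x = ∑ i : Fin r, (Afin i).card := by
    rw [show w x = (univ.filter fun a : G => χ a = χ (x + x - a)).card from rfl,
      Finset.card_eq_sum_card_fiberwise (f := χ) (t := univ) (fun a _ => mem_univ _)]
    apply Finset.sum_congr rfl
    intro i _
    congr 1
    ext a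
    simp only [hA, Finset.coe_filter, Set.mem_setOf_eq, mem_filter, mem_univ, true_and]
    constructor
    · rintro ⟨h1, h2⟩; exact ⟨h2, h2 ▸ h1.symm⟩
    · rintro ⟨h1, h2⟩; exact ⟨h1.trans h2.symm, h1⟩
  obtain ⟨i, -, himax⟩ := Finset.exists_max_image (univ : Finset (Fin r))
    (fun i => (Afin i).card) ⟨⟨0, hr⟩, mem_univ _⟩
  have hwi : w x ≤ r * (Afin i).card := by
    rw [hwx]
    calc ∑ i', (Afin i').card ≤ #(univ : Finset (Fin r)) • (Afin i).card :=
          Finset.sum_le_card_nsmul _ _ _ (fun y _ => himax y (mem_univ y))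
      _ = r * (Afin i).card := by rw [smul_eq_mul, card_univ, Fintype.card_fin]
  have hGpos : 0 < Fintype.card G := Fintype.card_pos
  have key : (r^2 * Fintype.card G) * n ≤ (r^2 * Fintype.card G) * (Afin i).card := by
    calc (r^2 * Fintype.card G) * n = (r^2 * n) * Fintype.card G := by ring
      _ ≤ Fintype.card G * Fintype.card G := Nat.mul_le_mul_right _ hG
      _ = (Fintype.card G)^2 := (sq _).symm
      _ ≤ r * Sset.card := hmain
      _ ≤ r * (Fintype.card G * w x) := Nat.mul_le_mul_left _ hSx
      _ ≤ r * (Fintype.card G * (r * (Afin i).card)) :=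
          Nat.mul_le_mul_left _ (Nat.mul_le_mul_left _ hwi)
      _ = (r^2 * Fintype.card G) * (Afin i).card := by ring
  refine ⟨x, i, Afin i, Nat.le_of_mul_le_mul_left key (by positivity), ?_, ?_⟩
  · intro a ha
    simp only [hA, mem_filter] at ha
    exact ha.2.1
  · intro a ha
    simp only [hA, coe_filter, Set.mem_setOf_eq, mem_filter, mem_univ, true_and] at ha ⊢
    exact ⟨ha.2, by rw [sub_sub_cancel]; exact ha.1⟩

/-- A set closed under the reflection is symmetric. -/
lemma sym_of_closed {G : Type} [AddCommGroup G] (A : Set G) (x : G)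
    (h : ∀ a ∈ A, 2 • x - a ∈ A) : A = (fun a => 2 • x - a) '' A := by
  ext b
  constructor
  · intro hb
    exact ⟨2 • x - b, h b hb, sub_sub_cancel _ _⟩
  · rintro ⟨a, ha, rfl⟩
    exact h a ha

/-- Transfer a good configuration along an injective hom. -/
lemma glue {r n : ℕ} {G H : Type} [AddCommGroup G] [AddCommGroup H] (f : H →+ G)
    (hf : Function.Injective f) (χ : G → Fin r) (x : H) (i : Fin r) (A : Finset H)
    (hcard : n ≤ A.card) (hmono : ∀ a ∈ A, χ (f a) = i) (hclosed : ∀ a ∈ A, x + x - a ∈ A) :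
    ∃ B : Set G, (∃ c, ∀ a ∈ B, χ a = c) ∧
      (∃ y : G, B = (fun a => 2 • y - a) '' B) ∧ (n : Cardinal) ≤ Cardinal.mk B := by
  refine ⟨f '' ↑A, ⟨i, ?_⟩, ⟨f x, ?_⟩, ?_⟩
  · rintro a ⟨b, hb, rfl⟩
    exact hmono b hb
  · apply sym_of_closed
    rintro a ⟨b, hb, rfl⟩
    refine ⟨x + x - b, hclosed b hb, ?_⟩
    rw [map_sub, map_add, two_nsmul]
  · rw [Cardinal.mk_image_eq_of_injOn _ _ hf.injOn]
    calc (n : Cardinal) ≤ (A.card : Cardinal) := by exact_mod_cast hcard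
      _ = Cardinal.mk (↑A : Set H) := (Cardinal.mk_coe_finset).symm

lemma interval_case {r n : ℕ} (hr : 0 < r) (hn : 0 < n) (G : Type) [AddCommGroup G]
    (g : G) (hg : Function.Injective fun m : ℤ => m • g) (χ : G → Fin r) :
    ∃ (x : G) (i : Fin r) (A : Finset G), n ≤ A.card ∧ (∀ a ∈ A, χ a = i) ∧
      ∀ a ∈ A, x + x - a ∈ A := by
  classical
  set N : ℕ := 8 * r^2 * n with hN
  have hNpos : 0 < N := by positivity
  set cl : ℤ → Fin r × ZMod 2 := fun m => (χ (m • g), (m : ZMod 2)) with hcl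
  set Box : Finset ℤ := Finset.Ico (0 : ℤ) (N : ℤ) with hBox
  have hBoxcard : Box.card = N := by
    rw [hBox, Int.card_Ico]
    simp
  -- pigeonhole into 2r classes
  obtain ⟨y, -, hymax⟩ := Finset.exists_max_image (univ : Finset (Fin r × ZMod 2))
    (fun y => (Box.filter fun a => cl a = y).card)
    ⟨(⟨0, hr⟩, 0), mem_univ _⟩
  set C : Finset ℤ := Box.filter (fun a => cl a = y) with hC
  set M : ℕ := C.card with hM
  have hNM : N ≤ 2 * r * M := by
    have h1 : Box.card = ∑ z : Fin r × ZMod 2, (Box.filter fun a => cl a = z).card :=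
      Finset.card_eq_sum_card_fiberwise (f := cl) (t := univ) (fun a _ => mem_univ _)
    calc N = Box.card := hBoxcard.symm
      _ = ∑ z : Fin r × ZMod 2, (Box.filter fun a => cl a = z).card := h1
      _ ≤ #(univ : Finset (Fin r × ZMod 2)) • M :=
          Finset.sum_le_card_nsmul _ _ _ (fun z _ => hymax z (mem_univ z))
      _ = 2 * r * M := by
          rw [smul_eq_mul, card_univ, Fintype.card_prod, Fintype.card_fin, ZMod.card]
          ring
  -- pigeonhole over sums
  have hsq : M * M = ∑ s ∈ Finset.Ico (0 : ℤ) (2 * N : ℤ),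
      (C.filter fun a => s - a ∈ C).card := by
    have hmaps : ∀ p ∈ C ×ˢ C, p.1 + p.2 ∈ Finset.Ico (0 : ℤ) (2 * N : ℤ) := by
      rintro ⟨a, b⟩ hp
      rw [Finset.mem_product] at hp
      obtain ⟨ha, hb⟩ := hp
      rw [hC, mem_filter, hBox, Finset.mem_Ico] at ha hb
      rw [Finset.mem_Ico]
      constructor
      · linarith [ha.1.1, hb.1.1]
      · push_cast
        linarith [ha.1.2, hb.1.2]
    rw [← Finset.card_product, Finset.card_eq_sum_card_fiberwise hmaps]
    apply Finset.sum_congr rfl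
    intro s _
    apply Finset.card_nbij' (fun p => p.1) (fun a => (a, s - a))
    · rintro ⟨a, b⟩ hp
      simp only [coe_filter, Set.mem_setOf_eq, mem_filter, Finset.mem_product] at hp ⊢
      exact ⟨hp.1.1, by rw [show s - a = b by linarith [hp.2]]; exact hp.1.2⟩
    · intro a ha
      simp only [coe_filter, Set.mem_setOf_eq, mem_filter, Finset.mem_product] at ha ⊢
      exact ⟨⟨ha.1, ha.2⟩, by ring⟩
    · rintro ⟨a, b⟩ hp
      simp only [coe_filter, Set.mem_setOf_eq, mem_filter] at hp
      have : s - a = b := by linarith [hp.2]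
      simp [this]
    · intro a _; rfl
  obtain ⟨s, -, hsmax⟩ := Finset.exists_max_image (Finset.Ico (0 : ℤ) (2 * N : ℤ))
    (fun s => (C.filter fun a => s - a ∈ C).card)
    (by rw [Finset.nonempty_Ico]; positivity)
  set As : Finset ℤ := C.filter (fun a => s - a ∈ C) with hAs
  have hMA : M * M ≤ 2 * N * As.card := by
    calc M * M = ∑ s' ∈ Finset.Ico (0 : ℤ) (2 * N : ℤ),
        (C.filter fun a => s' - a ∈ C).card := hsq
      _ ≤ (Finset.Ico (0 : ℤ) (2 * N : ℤ)).card • As.card :=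
          Finset.sum_le_card_nsmul _ _ _ (fun z hz => hsmax z hz)
      _ = 2 * N * As.card := by
          have h2N : ((2 * (N : ℤ) - 0).toNat) = 2 * N := by omega
          rw [smul_eq_mul, Int.card_Ico, h2N]
  -- n ≤ |As|
  have hcard : n ≤ As.card := by
    have h8 : 8 * r^2 * N * n ≤ 8 * r^2 * N * As.card := by
      calc 8 * r^2 * N * n = N * N := by rw [hN]; ring
        _ ≤ (2 * r * M) * (2 * r * M) := Nat.mul_le_mul hNM hNM
        _ = (2 * r)^2 * (M * M) := by ring
        _ ≤ (2 * r)^2 * (2 * N * As.card) := Nat.mul_le_mul_left _ hMA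
        _ = 8 * r^2 * N * As.card := by ring
    exact Nat.le_of_mul_le_mul_left h8 (by positivity)
  -- s is even
  obtain ⟨a0, ha0⟩ : As.Nonempty := Finset.card_pos.mp (lt_of_lt_of_le hn hcard)
  have hs2 : (s : ZMod 2) = 0 := by
    rw [hAs, mem_filter] at ha0
    have h1 : cl a0 = y := (mem_filter.mp ha0.1).2
    have h2 : cl (s - a0) = y := (mem_filter.mp ha0.2).2
    have h3 : ((a0 : ℤ) : ZMod 2) = ((s - a0 : ℤ) : ZMod 2) := by
      rw [show ((a0 : ℤ) : ZMod 2) = (cl a0).2 from rfl, h1,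
        show (((s - a0 : ℤ)) : ZMod 2) = (cl (s - a0)).2 from rfl, h2]
    push_cast at h3
    rw [eq_sub_iff_add_eq] at h3
    rw [← h3, ← two_mul, show (2 : ZMod 2) = 0 by decide, zero_mul]
  obtain ⟨x0, hx0⟩ : (2 : ℤ) ∣ s := (ZMod.intCast_zmod_eq_zero_iff_dvd s 2).mp hs2
  have hx0' : x0 + x0 = s := by omega
  have hAclosed : ∀ m ∈ As, s - m ∈ As := by
    intro m hm
    rw [hAs, mem_filter] at hm ⊢
    exact ⟨hm.2, by rw [sub_sub_cancel]; exact hm.1⟩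
  refine ⟨x0 • g, y.1, As.image (fun m => m • g), ?_, ?_, ?_⟩
  · rw [Finset.card_image_of_injective _ hg]
    exact hcard
  · intro a ha
    rw [Finset.mem_image] at ha
    obtain ⟨m, hm, rfl⟩ := ha
    have hcm : cl m = y := (mem_filter.mp ((mem_filter.mp hm).1)).2
    exact congrArg Prod.fst hcm
  · intro a ha
    rw [Finset.mem_image] at ha
    obtain ⟨m, hm, rfl⟩ := ha
    rw [Finset.mem_image]
    refine ⟨s - m, hAclosed m hm, ?_⟩
    rw [sub_zsmul, ← hx0', add_zsmul]
    abel

/-- If |G| ≥ r²·n then every r-coloring of the abelian group G has a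
monochromatic symmetric subset of size ≥ n. -/
theorem stmt_1 (r n : ℕ) (G : Type) [AddCommGroup G]
    (hG : ((r ^ 2 * n : ℕ) : Cardinal) ≤ Cardinal.mk G) (χ : G → Fin r) :
    ∃ A : Set G, (∃ c, ∀ a ∈ A, χ a = c) ∧
      (∃ x : G, A = (fun a => 2 • x - a) '' A) ∧ (n : Cardinal) ≤ Cardinal.mk A := by
  classical
  rcases Nat.eq_zero_or_pos r with hr | hr
  · subst hr; exact (χ 0).elim0
  rcases Nat.eq_zero_or_pos n with hn | hn
  · subst hn
    refine ⟨{0}, ⟨χ 0, ?_⟩, ⟨0, ?_⟩, by simp⟩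
    · intro a ha
      rw [Set.mem_singleton_iff] at ha
      rw [ha]
    · simp
  by_cases hfin : Finite G
  · have : Fintype G := Fintype.ofFinite G
    have hcard : r ^ 2 * n ≤ Fintype.card G := by
      rw [Cardinal.mk_fintype] at hG
      exact_mod_cast hG
    obtain ⟨x, i, A, h1, h2, h3⟩ := finite_case G hcard χ
    exact glue (AddMonoidHom.id G) (fun a b h => h) χ x i A h1 h2 h3
  · rw [not_finite_iff_infinite] at hfin
    by_cases htor : ∀ gg : G, IsOfFinAddOrder gg
    · -- torsion case: take a big finite subgroup
      obtain ⟨S, hS⟩ := Infinite.exists_subset_card_eq G (r ^ 2 * n)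
      set H := AddSubgroup.closure (S : Set G) with hH
      have hfg : AddGroup.FG ↥H := by infer_instance
      have htors : AddMonoid.IsTorsion ↥H := fun h =>
        AddSubmonoid.isOfFinAddOrder_coe.1 (htor ↑h)
      have hfinH : Finite ↥H := AddCommGroup.finite_of_fg_torsion ↥H htors
      have : Fintype ↥H := Fintype.ofFinite ↥H
      have hcard : r ^ 2 * n ≤ Fintype.card ↥H := by
        rw [← hS, ← Finset.card_univ]
        apply Finset.card_le_card_of_injOn
          (fun a => if h : a ∈ H then (⟨a, h⟩ : ↥H) else 0)
          (fun a _ => mem_univ _)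
        intro a ha b hb hab
        have haH : a ∈ H := AddSubgroup.subset_closure ha
        have hbH : b ∈ H := AddSubgroup.subset_closure hb
        simp only [dif_pos haH, dif_pos hbH] at hab
        exact congrArg Subtype.val hab
      obtain ⟨x, i, A, h1, h2, h3⟩ := finite_case ↥H hcard (fun h => χ ↑h)
      exact glue H.subtype Subtype.coe_injective χ x i A h1 h2 h3
    · push_neg at htor
      obtain ⟨gg, hgg⟩ := htor
      have hinj : Function.Injective fun m : ℤ => m • gg :=
        injective_zsmul_iff_not_isOfFinAddOrder.mpr hgg
      obtain ⟨x, i, A, h1, h2, h3⟩ := interval_case hr hn G gg hinj χ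
      exact glue (AddMonoidHom.id G) (fun a b h => h) χ x i A h1 h2 h3
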